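/- Let n ≥ 1, let γ : ℝ → ℝ^{n+1} be a smooth curve that is positive locally convex on [0,1], and let M ∈ SO(n+1). Then the time-reversed curve γ^{TR}(t) := J₊·M·γ(1−t) is positive locally convex on [0,1]. Moreover, if |γ(t)| = 1 for all t, then |γ^{TR}(t)| = 1 for all t. -/

import Mathlib

open Matrix
open scoped Classical

noncomputable section

def IsSignedPerm {m : ℕ} (Q : Matrix (Fin m) (Fin m) ℝ) : Prop :=
  (∀ i, ∃! j, Q i j ≠ 0) ∧ (∀ j, ∃! i, Q i j ≠ 0) ∧
    ∀ i j, Q i j ≠ 0 → Q i j = 1 ∨ Q i j = -1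

def NE {m : ℕ} (Q : Matrix (Fin m) (Fin m) ℝ) (i j : Fin m) : ℕ :=
  (Finset.univ.filter fun p : Fin m × Fin m => p.1 < i ∧ j < p.2 ∧ Q p.1 p.2 ≠ 0).card

def SW {m : ℕ} (Q : Matrix (Fin m) (Fin m) ℝ) (i j : Fin m) : ℕ := NE Qᵀ j i

def deltaRow {m : ℕ} (Q : Matrix (Fin m) (Fin m) ℝ) (i : Fin m) : ℝ :=
  ∑ j, Q i j * (-1 : ℝ) ^ NE Q i j

def DeltaM {m : ℕ} (Q : Matrix (Fin m) (Fin m) ℝ) : Matrix (Fin m) (Fin m) ℝ :=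
  Matrix.diagonal (deltaRow Q)

def sFun {m : ℕ} (Q : Matrix (Fin m) (Fin m) ℝ) : ℝ := (DeltaM Q).trace

def Jplus (m : ℕ) : Matrix (Fin m) (Fin m) ℝ :=
  Matrix.diagonal fun i => (-1 : ℝ) ^ (i : ℕ)

def TR {m : ℕ} (Q : Matrix (Fin m) (Fin m) ℝ) : Matrix (Fin m) (Fin m) ℝ :=
  Jplus m * Qᵀ * Jplus m

def Amat (m : ℕ) : Matrix (Fin m) (Fin m) ℝ :=
  Matrix.of fun i j => if (i : ℕ) + (j : ℕ) = m - 1 then (-1 : ℝ) ^ (i : ℕ) else 0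

def AD {m : ℕ} (Q : Matrix (Fin m) (Fin m) ℝ) : Matrix (Fin m) (Fin m) ℝ :=
  (Amat m)ᵀ * Q * Amat m

def IsUpperPos {m : ℕ} (R : Matrix (Fin m) (Fin m) ℝ) : Prop :=
  (∀ i j, j < i → R i j = 0) ∧ ∀ i, 0 < R i i

def Wmat {m : ℕ} (γ : ℝ → Fin m → ℝ) (t : ℝ) : Matrix (Fin m) (Fin m) ℝ :=
  Matrix.of fun i j => iteratedDeriv (j : ℕ) γ t i

def Wronskian {m : ℕ} (γ : ℝ → Fin m → ℝ) (t : ℝ) : ℝ := (Wmat γ t).det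

def PosLocConv {m : ℕ} (γ : ℝ → Fin m → ℝ) : Prop :=
  ∀ t ∈ Set.Icc (0 : ℝ) 1, 0 < Wronskian γ t

def IsFrameAt {m : ℕ} (γ : ℝ → Fin m → ℝ) (t : ℝ) (F : Matrix (Fin m) (Fin m) ℝ) : Prop :=
  Fᵀ * F = 1 ∧ F.det = 1 ∧ ∃ R, IsUpperPos R ∧ Wmat γ t = F * R

def IsFrenet {m : ℕ} (γ : ℝ → Fin m → ℝ) (F : ℝ → Matrix (Fin m) (Fin m) ℝ) : Prop :=
  ∀ t ∈ Set.Icc (0 : ℝ) 1, IsFrameAt γ t (F t)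

def e1 {m : ℕ} : Fin m → ℝ := fun i => if (i : ℕ) = 0 then 1 else 0

def frobNorm {m : ℕ} (M : Matrix (Fin m) (Fin m) ℝ) : ℝ :=
  Real.sqrt (∑ i, ∑ j, (M i j) ^ 2)

lemma iteratedDeriv_mulVec {m k : ℕ} (A : Matrix (Fin m) (Fin m) ℝ) {f : ℝ → Fin m → ℝ}
    (hf : ContDiff ℝ (⊤ : ℕ∞) f) (t : ℝ) :
    iteratedDeriv k (fun s => A.mulVec (f s)) t = A.mulVec (iteratedDeriv k f t) := by
  let g : (Fin m → ℝ) →L[ℝ] (Fin m → ℝ) := (Matrix.mulVecLin A).toContinuousLinearMap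
  have hcomp : (fun s => A.mulVec (f s)) = g ∘ f := rfl
  rw [hcomp, iteratedDeriv_eq_iteratedFDeriv,
    g.iteratedFDeriv_comp_left (hf.contDiffAt (x := t)) (by exact_mod_cast le_top), iteratedDeriv_eq_iteratedFDeriv]
  rfl

lemma iteratedDeriv_rev {m k : ℕ} (A : Matrix (Fin m) (Fin m) ℝ) {γ : ℝ → Fin m → ℝ}
    (hγ : ContDiff ℝ (⊤ : ℕ∞) γ) (t : ℝ) :
    iteratedDeriv k (fun s => A.mulVec (γ (1 - s))) t
      = ((-1 : ℝ) ^ k) • A.mulVec (iteratedDeriv k γ (1 - t)) := by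
  have h1 : (fun s : ℝ => A.mulVec (γ (1 - s)))
      = fun s : ℝ => A.mulVec (γ (1 + -s)) := by
    funext s; rw [show (1 : ℝ) + -s = 1 - s by ring]
  rw [h1, iteratedDeriv_comp_neg k (fun x => A.mulVec (γ (1 + x))) t,
    congrFun (iteratedDeriv_comp_const_add k (fun y => A.mulVec (γ y)) 1) (-t),
    show (1 : ℝ) + -t = 1 - t by ring, iteratedDeriv_mulVec A hγ]

theorem stmt13 (n : ℕ) (hn : 1 ≤ n) (γ : ℝ → Fin (n+1) → ℝ) (hγ : ContDiff ℝ (⊤ : ℕ∞) γ)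
    (hconv : PosLocConv γ) (M : Matrix (Fin (n+1)) (Fin (n+1)) ℝ)
    (hM : Mᵀ * M = 1) (hMdet : M.det = 1) :
    PosLocConv (fun t => (Jplus (n+1) * M).mulVec (γ (1 - t))) ∧
      ((∀ t : ℝ, ∑ i, (γ t i) ^ 2 = 1) →
        ∀ t : ℝ, ∑ i, ((Jplus (n+1) * M).mulVec (γ (1 - t)) i) ^ 2 = 1) := by
  set A := Jplus (n+1) * M with hAdef
  have hJJ : Jplus (n+1) * Jplus (n+1) = 1 := by
    rw [Jplus, Matrix.diagonal_mul_diagonal]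
    ext i j
    by_cases h : i = j <;>
      simp [Matrix.diagonal, Matrix.one_apply, h, ← pow_add, (by omega : (i:ℕ) + i = 2 * i),
        pow_mul]
  have hJT : (Jplus (n+1))ᵀ = Jplus (n+1) := Matrix.diagonal_transpose _
  have hW : ∀ t, Wmat (fun s => A.mulVec (γ (1 - s))) t = A * Wmat γ (1 - t) * Jplus (n+1) := by
    intro t
    ext i j
    have := iteratedDeriv_rev (k := (j : ℕ)) A hγ t
    have hdJ : (A * Wmat γ (1 - t) * Jplus (n+1)) i j
        = (A * Wmat γ (1 - t)) i j * (-1 : ℝ) ^ (j : ℕ) := by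
      rw [Jplus, Matrix.mul_diagonal]
    rw [hdJ, Matrix.mul_apply]
    show iteratedDeriv (j : ℕ) (fun s => A.mulVec (γ (1 - s))) t i = _
    rw [this]
    simp only [Pi.smul_apply, smul_eq_mul, Matrix.mulVec, dotProduct, Wmat,
      Matrix.of_apply]
    rw [mul_comm]
  constructor
  · intro t ht
    have ht' : 1 - t ∈ Set.Icc (0 : ℝ) 1 := ⟨by linarith [ht.2], by linarith [ht.1]⟩
    have hpos := hconv (1 - t) ht'
    have hdetJ2 : (Jplus (n+1)).det * (Jplus (n+1)).det = 1 := by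
      rw [← Matrix.det_mul, hJJ, Matrix.det_one]
    unfold Wronskian at hpos ⊢
    rw [hW t, Matrix.det_mul, Matrix.det_mul, hAdef, Matrix.det_mul, hMdet, mul_one]
    have heq : (Jplus (n+1)).det * (Wmat γ (1 - t)).det * (Jplus (n+1)).det
        = (Wmat γ (1 - t)).det := by
      rw [mul_comm, ← mul_assoc, hdetJ2, one_mul]
    rw [heq]; exact hpos
  · intro hnorm t
    have hAA : Aᵀ * A = 1 := by
      rw [hAdef, Matrix.transpose_mul, hJT, Matrix.mul_assoc, ← Matrix.mul_assoc (Jplus (n+1)),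
        hJJ, Matrix.one_mul, hM]
    have key : ∀ v : Fin (n+1) → ℝ, ∑ i, (A.mulVec v i) ^ 2 = ∑ i, (v i) ^ 2 := by
      intro v
      have h1 : ∑ i, (A.mulVec v i) ^ 2 = (A.mulVec v) ⬝ᵥ (A.mulVec v) := by
        simp [dotProduct, sq]
      have h2 : (A.mulVec v) ⬝ᵥ (A.mulVec v) = v ⬝ᵥ v := by
        rw [Matrix.dotProduct_mulVec, ← Matrix.mulVec_transpose, Matrix.mulVec_mulVec, hAA,
          Matrix.one_mulVec]
      rw [h1, h2]
      simp [dotProduct, sq]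
    rw [key (γ (1 - t))]
    exact hnorm (1 - t)
end
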